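/- arXiv:2011.07630 — 3 statements merged into one kernel-verified Lean document; each statement's English description precedes it below -/
import Mathlib

section
/- Let Σ = {0,1} and Γ = {a,b}, and let L ⊆ (Σ×Γ)^ω be the bi-language L = {0^ω ⊕ a^ω} ∪ {v ⊕ b^ω : v ∈ Σ^ω, v ≠ 0^ω}. Then L is Σ-exhaustive, yet no concrete tree is contained in L (concTrees(L) = ∅). In particular, there exists a Σ-exhaustive bi-language L with concTrees(L) = ∅. -/
/-- The prefix of length `n` of an infinite word `w`. -/
def ipre {α : Type*} (w : ℕ → α) (n : ℕ) : List α :=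
  List.ofFn (fun i : Fin n => w i)

/-- The pairing `v ⊕ w` of two infinite words. -/
def ipair {α β : Type*} (v : ℕ → α) (w : ℕ → β) : ℕ → α × β :=
  fun n => (v n, w n)

/-- The set of finite prefixes of members of a set of infinite words. -/
def prefSet {α : Type*} (U : Set (ℕ → α)) : Set (List α) :=
  {x | ∃ w ∈ U, x = ipre w x.length}

/-- A concrete tree `τ : Σ* → Γ` is contained in the bi-language `L`. -/
def ConcContained {Sig Gam : Type*} (L : Set (ℕ → Sig × Gam)) (τ : List Sig → Gam) : Prop :=
  ∀ v : ℕ → Sig, ipair v (fun n => τ (ipre v (n + 1))) ∈ L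

/-- A symbolic tree `T : Σ* → 2^Γ` is contained in the bi-language `L`. -/
def SymbContained {Sig Gam : Type*} (L : Set (ℕ → Sig × Gam)) (T : List Sig → Set Gam) : Prop :=
  ∀ (v : ℕ → Sig) (w : ℕ → Gam), (∀ n, w n ∈ T (ipre v (n + 1))) → ipair v w ∈ L

/-- A symbolic transducer over `(Sig, Gam)` with state set `Q`. -/
structure SymTrans (Sig Gam Q : Type*) where
  init : Q
  delta : Q → Sig → Set Q
  delta_ne : ∀ q σ, (delta q σ).Nonempty
  eta : Q → Set Gam
  eta_ne : ∀ q, (eta q).Nonempty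

/-- `GenFrom A q w`: the finite bi-word `w` is generated by `A` starting at state `q`. -/
inductive GenFrom {Sig Gam Q : Type*} (A : SymTrans Sig Gam Q) : Q → List (Sig × Gam) → Prop
  | nil (q : Q) : GenFrom A q []
  | cons {q q' : Q} {σ : Sig} {γ : Gam} {w : List (Sig × Gam)} :
      q' ∈ A.delta q σ → γ ∈ A.eta q' → GenFrom A q' w → GenFrom A q ((σ, γ) :: w)

/-- `⟦A⟧_*`, the set of finite bi-words generated by `A`. -/
def genFin {Sig Gam Q : Type*} (A : SymTrans Sig Gam Q) : Set (List (Sig × Gam)) :=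
  {w | GenFrom A A.init w}

/-- `⟦A⟧_ω`, the set of infinite bi-words generated by `A`. -/
def genInf {Sig Gam Q : Type*} (A : SymTrans Sig Gam Q) : Set (ℕ → Sig × Gam) :=
  {w | ∃ run : ℕ → Q, run 0 = A.init ∧
        ∀ n, run (n + 1) ∈ A.delta (run n) (w n).1 ∧ (w n).2 ∈ A.eta (run (n + 1))}

/-- A safety language of infinite words. -/
def IsSafety {α : Type*} (U : Set (ℕ → α)) : Prop :=
  ∃ S : Set (List α), U = {w | ∀ n, ipre w n ∈ S}

/-- A concrete (deterministic, single-output) transducer. -/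
structure ConTrans (Sig Gam Q : Type*) where
  init : Q
  delta : Q → Sig → Q
  eta : Q → Gam

/-- Iterated transition function `δ*`. -/
def dstar {Sig Q : Type*} (d : Q → Sig → Q) (q : Q) (v : List Sig) : Q :=
  v.foldl d q

/-- `⟦C⟧_ω`, the set of infinite bi-words generated by a concrete transducer `C`. -/
def genInfC {Sig Gam Q : Type*} (C : ConTrans Sig Gam Q) : Set (ℕ → Sig × Gam) :=
  {w | ∀ n, (w n).2 = C.eta (dstar C.delta C.init (ipre (fun k => (w k).1) (n + 1)))}

/-- The right-congruence `v₁ ~_U v₂` on input words induced by a bi-language `U`. -/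
def EquivU {Sig Gam : Type*} (U : Set (ℕ → Sig × Gam)) (v1 v2 : List Sig) : Prop :=
  ∀ (x : List (Sig × Gam)) (u1 u2 : List Gam),
    u1.length = v1.length → u2.length = v2.length →
    v1.zip u1 ∈ prefSet U → v2.zip u2 ∈ prefSet U →
    (v1.zip u1 ++ x ∈ prefSet U ↔ v2.zip u2 ++ x ∈ prefSet U)

/-- A sequence is ultimately periodic. -/
def UltPeriodic {α : Type*} (f : ℕ → α) : Prop :=
  ∃ N p : ℕ, 0 < p ∧ ∀ n ≥ N, f (n + p) = f n

/-- The bi-language L = {0^ω ⊕ a^ω} ∪ {v ⊕ b^ω : v ≠ 0^ω}, with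
Σ = Bool (0 = false, 1 = true) and Γ = Bool (a = false, b = true). -/
def L0 : Set (ℕ → Bool × Bool) :=
  {bw | (∀ n, bw n = (false, false)) ∨
        ((∃ n, (bw n).1 = true) ∧ ∀ n, (bw n).2 = true)}

theorem stmt_0 :
    (∀ v : ℕ → Bool, ∃ w : ℕ → Bool, ipair v w ∈ L0) ∧
    (¬ ∃ τ : List Bool → Bool, ConcContained L0 τ) ∧
    (∃ L : Set (ℕ → Bool × Bool),
      (∀ v : ℕ → Bool, ∃ w : ℕ → Bool, ipair v w ∈ L) ∧
      ¬ ∃ τ : List Bool → Bool, ConcContained L τ) := by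
  have hex : ∀ v : ℕ → Bool, ∃ w : ℕ → Bool, ipair v w ∈ L0 := by
    intro v
    by_cases h : ∀ n, v n = false
    · exact ⟨fun _ => false, Or.inl fun n => by simp [ipair, h n]⟩
    · push_neg at h
      obtain ⟨n, hn⟩ := h
      exact ⟨fun _ => true, Or.inr ⟨⟨n, by simpa [ipair] using hn⟩, fun _ => rfl⟩⟩
  have hnc : ¬ ∃ τ : List Bool → Bool, ConcContained L0 τ := by
    rintro ⟨τ, hτ⟩
    have h1 : ipre (fun _ : ℕ => false) 1 = [false] := by
      rfl
    have h0 := hτ (fun _ => false)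
    have hf : τ [false] = false := by
      rcases h0 with h | h
      · have := h 0
        simp [ipair, h1] at this
        exact this
      · obtain ⟨⟨n, hn⟩, _⟩ := h
        simp [ipair] at hn
    set v' : ℕ → Bool := fun n => decide (n = 1) with hv'
    have h1' : ipre v' 1 = [false] := by
      rfl
    have h2 := hτ v'
    rcases h2 with h | h
    · have := h 1
      simp [ipair, hv'] at this
    · have := h.2 0
      simp [ipair, h1', hf] at this
  exact ⟨hex, hnc, L0, hex, hnc⟩
end

section
/- Let U ⊆ (Σ×Γ)^ω be a safety language and let A be a symbolic transducer over (Σ,Γ) with a finite state set such that ⟦A⟧_* ⊆ pref(U). Then ⟦A⟧_ω ⊆ U. In particular, if a symbolic conjecture query on A returns true (i.e., all finite bi-words generated by A are prefixes of words of U), then any concretization C of A realizes U, i.e., ⟦C⟧_ω ⊆ U. -/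
theorem stmt_7 {Sig Gam Q : Type} [Fintype Sig] [Nonempty Sig] [Fintype Gam] [Nonempty Gam]
    [Fintype Q] [Nonempty Q]
    (U : Set (ℕ → Sig × Gam)) (hU : IsSafety U)
    (A : SymTrans Sig Gam Q) (h : genFin A ⊆ prefSet U) :
    genInf A ⊆ U ∧
    ∀ C : SymTrans Sig Gam Q, C.init = A.init →
      (∀ q σ, C.delta q σ ⊆ A.delta q σ) → (∀ q, C.eta q ⊆ A.eta q) →
      (∀ q σ, ∃ q', C.delta q σ = {q'}) → (∀ q, ∃ γ, C.eta q = {γ}) →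
      genInf C ⊆ U := by
  obtain ⟨S, hS⟩ := hU
  have key : genInf A ⊆ U := by
    intro w hw
    obtain ⟨run, hr0, hr⟩ := hw
    have gen : ∀ n m, GenFrom A (run m) (List.ofFn fun i : Fin n => w (m + i)) := by
      intro n
      induction n with
      | zero => intro m; simpa using GenFrom.nil (run m)
      | succ n ih =>
        intro m
        rw [List.ofFn_succ]
        have : (List.ofFn fun i : Fin n => w (m + (i : ℕ).succ)) =
            (List.ofFn fun i : Fin n => w ((m + 1) + i)) := by
          congr 1; funext i; congr 1; omega
        have h1 := (hr m).1
        have h2 := (hr m).2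
        have h3 : GenFrom A (run (m + 1)) (List.ofFn fun i : Fin n => w (m + (i : ℕ).succ)) := by
          rw [this]; exact ih (m + 1)
        have := GenFrom.cons (A := A) h1 h2 h3
        simpa [Prod.mk.eta] using this
    have hpre : ∀ n, ipre w n ∈ S := by
      intro n
      have hw' : ipre w n ∈ genFin A := by
        have := gen n 0
        simp only [Nat.zero_add] at this
        simpa [genFin, ipre, ← hr0] using this
      obtain ⟨w', hw'U, heq⟩ := h hw'
      have hlen : (ipre w n).length = n := by simp [ipre]
      rw [heq, hlen]
      rw [hS] at hw'U
      exact hw'U n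
    rw [hS]; exact hpre
  refine ⟨key, ?_⟩
  intro C hinit hdel heta _ _ w hw
  apply key
  obtain ⟨run, hr0, hr⟩ := hw
  exact ⟨run, by rw [hr0, hinit], fun n => ⟨hdel _ _ (hr n).1, heta _ (hr n).2⟩⟩
end

section
/- Let C = (Q, q_ι, δ, η) be a concrete transducer over (Σ,Γ) with |Q| = n states and let U = ⟦C⟧_ω. Then every set of finite words in Σ^* that are pairwise inequivalent under ~_U has cardinality at most n. (Equivalently: if rank(U), the number of ~_U-equivalence classes, equals m, then C has at least m states.) -/
@[simp] lemma length_ipre {α : Type*} (w : ℕ → α) (n : ℕ) : (ipre w n).length = n := by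
  simp [ipre]

@[simp] lemma getElem_ipre {α : Type*} (w : ℕ → α) (n i : ℕ) (h : i < (ipre w n).length) :
    (ipre w n)[i] = w i := by
  simp [ipre]

lemma eq_ipre_iff {α : Type*} (y : List α) (w : ℕ → α) :
    y = ipre w y.length ↔ ∀ i (h : i < y.length), y[i] = w i := by
  constructor
  · intro hy i hi
    rw [List.getElem_of_eq hy hi]; simp
  · intro hA
    apply List.ext_getElem
    · simp
    · intro i h1 h2; simp [hA i h1]

/-- Auxiliary: recursive condition for a finite bi-word to be generable from state `q`. -/
def condC {Sig Gam Q : Type} (C : ConTrans Sig Gam Q) : Q → List (Sig × Gam) → Prop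
  | _, [] => True
  | q, p :: t => p.2 = C.eta (C.delta q p.1) ∧ condC C (C.delta q p.1) t

lemma condC_append {Sig Gam Q : Type} (C : ConTrans Sig Gam Q) (y x : List (Sig × Gam)) :
    ∀ q, condC C q (y ++ x) ↔ condC C q y ∧ condC C (dstar C.delta q (y.map Prod.fst)) x := by
  induction y with
  | nil => intro q; simp [condC, dstar]
  | cons p t ih =>
      intro q
      have h := ih (C.delta q p.1)
      simp only [List.cons_append, condC, List.map_cons, dstar, List.foldl_cons, List.append_eq] at h ⊢
      rw [h]; tauto

lemma condC_iff {Sig Gam Q : Type} (C : ConTrans Sig Gam Q) (y : List (Sig × Gam)) :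
    ∀ q, condC C q y ↔
      ∀ k (hk : k < y.length),
        (y[k]).2 = C.eta (dstar C.delta q ((y.take (k + 1)).map Prod.fst)) := by
  induction y with
  | nil => intro q; simp [condC]
  | cons p t ih =>
      intro q
      constructor
      · rintro ⟨h1, h2⟩ k hk
        cases k with
        | zero => simpa [dstar] using h1
        | succ k =>
            have := (ih (C.delta q p.1)).mp h2 k (by simpa using hk)
            simpa [dstar, List.foldl_cons] using this
      · intro hA
        refine ⟨?_, (ih (C.delta q p.1)).mpr ?_⟩
        · exact hA 0 (by simp)
        · intro k hk
          have := hA (k + 1) (by simpa using hk)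
          simpa [dstar, List.foldl_cons] using this

lemma mem_prefSet_genInfC {Sig Gam Q : Type} [Nonempty Sig] (C : ConTrans Sig Gam Q)
    (y : List (Sig × Gam)) : y ∈ prefSet (genInfC C) ↔ condC C C.init y := by
  rw [condC_iff]
  constructor
  · rintro ⟨w, hw, hy⟩ k hk
    rw [eq_ipre_iff] at hy
    have htake : (y.take (k + 1)).map Prod.fst = ipre (fun i => (w i).1) (k + 1) := by
      apply List.ext_getElem
      · simp; omega
      · intro i h1 h2
        have hi : i < k + 1 := by simpa using h2
        have hiy : i < y.length := by omega
        simp [List.getElem_take, hy i hiy]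
    rw [htake, hy k hk]
    exact hw k
  · intro hA
    classical
    set a : ℕ → Sig := fun n => if h : n < y.length then (y[n]).1 else Classical.arbitrary Sig
      with ha
    set w : ℕ → Sig × Gam :=
      fun n => (a n, C.eta (dstar C.delta C.init (ipre a (n + 1)))) with hwdef
    have haw : (fun k => (w k).1) = a := rfl
    refine ⟨w, ?_, ?_⟩
    · intro n; rfl
    · rw [eq_ipre_iff]
      intro i hi
      have htake : ipre a (i + 1) = (y.take (i + 1)).map Prod.fst := by
        apply List.ext_getElem
        · simp; omega
        · intro j hj1 hj2
          have hji : j < i + 1 := by simpa using hj1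
          have hjy : j < y.length := by omega
          simp [List.getElem_take, ha, hjy]
      have : w i = ((y[i]).1, (y[i]).2) := by
        rw [hwdef]
        simp only [htake]
        rw [← hA i hi]
        simp [ha, hi]
      simp [this]

lemma equiv_of_same_state {Sig Gam Q : Type} [Nonempty Sig] (C : ConTrans Sig Gam Q)
    (v1 v2 : List Sig) (hst : dstar C.delta C.init v1 = dstar C.delta C.init v2) :
    EquivU (genInfC C) v1 v2 := by
  intro x u1 u2 h1 h2 hm1 hm2
  rw [mem_prefSet_genInfC] at hm1 hm2 ⊢
  rw [mem_prefSet_genInfC]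
  rw [condC_append, condC_append]
  have e1 : (v1.zip u1).map Prod.fst = v1 := List.map_fst_zip (le_of_eq h1.symm)
  have e2 : (v2.zip u2).map Prod.fst = v2 := List.map_fst_zip (le_of_eq h2.symm)
  rw [e1, e2, hst]
  tauto


theorem stmt_10 {Sig Gam Q : Type} [Fintype Sig] [Nonempty Sig] [Fintype Gam] [Nonempty Gam]
    [Fintype Q] [Nonempty Q] (C : ConTrans Sig Gam Q)
    (V : Finset (List Sig))
    (h : ∀ v1 ∈ V, ∀ v2 ∈ V, v1 ≠ v2 → ¬ EquivU (genInfC C) v1 v2) :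
    V.card ≤ Fintype.card Q := by
  classical
  have hinj : Set.InjOn (fun v => dstar C.delta C.init v) V := by
    intro v1 hv1 v2 hv2 heq
    by_contra hne
    exact h v1 hv1 v2 hv2 hne (equiv_of_same_state C v1 v2 heq)
  calc V.card = (V.image (fun v => dstar C.delta C.init v)).card :=
        (Finset.card_image_of_injOn hinj).symm
    _ ≤ Fintype.card Q := Finset.card_le_univ _
end
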